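/- Let m, d, n be positive integers and let X₁,…,Xₙ ∈ {0,…,d−1} satisfy d ∣ ∑ₖ Xₖ. For Y = (Y₁,…,Yₙ) with each Yₖ ∈ {0,…,m−1}, define the outcome amplitude A(Y) = m^{−(n+1)/2} · ∑_{i=0}^{m−1} exp( 2πi · i · (∑ₖ Xₖ − d·∑ₖ Yₖ) / (m·d) ). Then ∑_Y |A(Y)|² = 1, where the sum runs over all Y ∈ {0,…,m−1}ⁿ; moreover the sum restricted to those Y with d·∑ₖ Yₖ ≡ ∑ₖ Xₖ (mod m·d) already equals 1. In particular, for each such winning outcome Y one has |A(Y)|² = m^{1−n}, and the number of winning outcomes is m^{n−1}. -/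

import Mathlib

/-- The outcome amplitude `A(Y) = m^{-(n+1)/2} ∑_{j=0}^{m-1} exp(2πi·j·(∑Xₖ - d∑Yₖ)/(md))`
of the sequential GHZ measurement in the modulo-(m,d) game. -/
noncomputable def ghzAmp (m d n : ℕ) (X : ℕ → ℕ) (Y : Fin n → Fin m) : ℂ :=
  (((m : ℝ) ^ (-(((n : ℝ) + 1) / 2)) : ℝ) : ℂ) *
    ∑ j ∈ Finset.range m,
      Complex.exp (2 * (Real.pi : ℂ) * Complex.I * (j : ℂ) *
        ((((∑ k ∈ Finset.range n, (X k : ℤ)) -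
            (d : ℤ) * ∑ k : Fin n, ((Y k : ℕ) : ℤ)) : ℤ) : ℂ) /
        ((m : ℂ) * (d : ℂ)))

/-- An outcome `Y` wins the modulo-(m,d) game if `d ∑ Yₖ ≡ ∑ Xₖ (mod m d)`. -/
def GhzWinning (m d n : ℕ) (X : ℕ → ℕ) (Y : Fin n → Fin m) : Prop :=
  ((d : ℤ) * ∑ k : Fin n, ((Y k : ℕ) : ℤ)) ≡
    (∑ k ∈ Finset.range n, (X k : ℤ)) [ZMOD ((m : ℤ) * d)]

instance (m d n : ℕ) (X : ℕ → ℕ) : DecidablePred (GhzWinning m d n X) := fun Y => by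
  unfold GhzWinning Int.ModEq
  infer_instance

/-- Geometric sum of `m`-th roots of unity: it is `m` if `m ∣ T` and `0` otherwise. -/
private lemma ghz_geom_aux (m : ℕ) (hm : 0 < m) (T : ℤ) :
    ∑ j ∈ Finset.range m,
        Complex.exp (2 * (Real.pi : ℂ) * Complex.I * (j : ℂ) * (T : ℂ) / (m : ℂ)) =
      if (m : ℤ) ∣ T then (m : ℂ) else 0 := by
  have hm0 : (m : ℂ) ≠ 0 := Nat.cast_ne_zero.2 hm.ne'
  set ζ : ℂ := Complex.exp (2 * (Real.pi : ℂ) * Complex.I * (T : ℂ) / (m : ℂ)) with hζ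
  have hterm : ∀ j : ℕ,
      Complex.exp (2 * (Real.pi : ℂ) * Complex.I * (j : ℂ) * (T : ℂ) / (m : ℂ)) = ζ ^ j := by
    intro j
    rw [hζ, ← Complex.exp_nat_mul]
    congr 1
    ring
  simp_rw [hterm]
  by_cases hdvd : (m : ℤ) ∣ T
  · obtain ⟨s, rfl⟩ := hdvd
    have h1 : ζ = 1 := by
      rw [hζ]
      have h : 2 * (Real.pi : ℂ) * Complex.I * (((m : ℤ) * s : ℤ) : ℂ) / (m : ℂ)
          = (s : ℂ) * (2 * (Real.pi : ℂ) * Complex.I) := by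
        push_cast
        field_simp
      rw [h, Complex.exp_int_mul_two_pi_mul_I]
    simp [h1]
  · have h2pi : (2 * (Real.pi : ℂ) * Complex.I) ≠ 0 := by
      simp [Real.pi_ne_zero, Complex.I_ne_zero, Complex.ofReal_ne_zero]
    have hζm : ζ ^ m = 1 := by
      rw [hζ, ← Complex.exp_nat_mul]
      have h : (m : ℂ) * (2 * (Real.pi : ℂ) * Complex.I * (T : ℂ) / (m : ℂ))
          = (T : ℂ) * (2 * (Real.pi : ℂ) * Complex.I) := by
        field_simp
      rw [h, Complex.exp_int_mul_two_pi_mul_I]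
    have hζ1 : ζ ≠ 1 := by
      intro h
      rw [hζ, Complex.exp_eq_one_iff] at h
      obtain ⟨k, hk⟩ := h
      apply hdvd
      refine ⟨k, ?_⟩
      field_simp at hk
      have h' : (T : ℂ) = (k : ℂ) * (m : ℂ) :=
        mul_left_cancel₀ h2pi (by rw [hk]; ring)
      have h'' : (T : ℂ) = (((m : ℤ) * k : ℤ) : ℂ) := by push_cast; rw [h']; ring
      exact_mod_cast h''
    rw [geom_sum_eq hζ1, hζm]
    simp [hdvd]

/-- The winning condition is equivalent to `m ∣ c - ∑ Yₖ` where `∑ Xₖ = d c`. -/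
private lemma ghz_win_iff (m d n : ℕ) (hd : 0 < d) (X : ℕ → ℕ) (c : ℤ)
    (hc : ∑ k ∈ Finset.range n, (X k : ℤ) = d * c) (Y : Fin n → Fin m) :
    GhzWinning m d n X Y ↔ (m : ℤ) ∣ (c - ∑ k : Fin n, ((Y k : ℕ) : ℤ)) := by
  have hd0 : (d : ℤ) ≠ 0 := Int.natCast_ne_zero.2 hd.ne'
  unfold GhzWinning
  rw [Int.modEq_iff_dvd, hc]
  have h : (d : ℤ) * c - (d : ℤ) * ∑ k : Fin n, ((Y k : ℕ) : ℤ)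
      = (d : ℤ) * (c - ∑ k : Fin n, ((Y k : ℕ) : ℤ)) := by ring
  rw [h, show ((m : ℤ) * d) = (d : ℤ) * m from mul_comm _ _]
  exact mul_dvd_mul_iff_left hd0

/-- The probability of outcome `Y` is `m^{1-n}` if `Y` wins and `0` otherwise. -/
private lemma ghz_amp_sq (m d n : ℕ) (hm : 0 < m) (hd : 0 < d)
    (X : ℕ → ℕ) (c : ℤ) (hc : ∑ k ∈ Finset.range n, (X k : ℤ) = d * c)
    (Y : Fin n → Fin m) :
    ‖ghzAmp m d n X Y‖ ^ 2 =
      if GhzWinning m d n X Y then (m : ℝ) ^ ((1 : ℤ) - (n : ℤ)) else 0 := by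
  have hm0 : (m : ℂ) ≠ 0 := Nat.cast_ne_zero.2 hm.ne'
  have hd0 : (d : ℂ) ≠ 0 := Nat.cast_ne_zero.2 hd.ne'
  have hmR : (0 : ℝ) < (m : ℝ) := by exact_mod_cast hm
  set T : ℤ := c - ∑ k : Fin n, ((Y k : ℕ) : ℤ) with hT
  have hZ : (∑ k ∈ Finset.range n, (X k : ℤ)) - (d : ℤ) * ∑ k : Fin n, ((Y k : ℕ) : ℤ)
      = (d : ℤ) * T := by rw [hc, hT]; ring
  have hsum : ghzAmp m d n X Y =
      (((m : ℝ) ^ (-(((n : ℝ) + 1) / 2)) : ℝ) : ℂ) *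
        ∑ j ∈ Finset.range m,
          Complex.exp (2 * (Real.pi : ℂ) * Complex.I * (j : ℂ) * (T : ℂ) / (m : ℂ)) := by
    unfold ghzAmp
    congr 1
    refine Finset.sum_congr rfl fun j _ => ?_
    congr 1
    rw [hZ]
    push_cast
    field_simp
  rw [hsum, ghz_geom_aux m hm T]
  set r : ℝ := (m : ℝ) ^ (-(((n : ℝ) + 1) / 2)) with hr
  have hrpos : 0 < r := Real.rpow_pos_of_pos hmR _
  by_cases hw : GhzWinning m d n X Y
  · rw [if_pos hw, if_pos ((ghz_win_iff m d n hd X c hc Y).mp hw)]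
    rw [norm_mul, Complex.norm_real, Complex.norm_natCast, Real.norm_of_nonneg hrpos.le]
    have h1 : r ^ 2 = (m : ℝ) ^ (-(n : ℝ) - 1) := by
      rw [hr, ← Real.rpow_natCast ((m : ℝ) ^ (-(((n : ℝ) + 1) / 2))) 2,
        ← Real.rpow_mul hmR.le]
      congr 1
      push_cast
      ring
    have h2 : ((m : ℕ) : ℝ) ^ (2 : ℕ) = (m : ℝ) ^ (2 : ℝ) := by
      rw [← Real.rpow_natCast]
      norm_num
    have h3 : (m : ℝ) ^ ((1 : ℤ) - (n : ℤ)) = (m : ℝ) ^ ((1 : ℝ) - (n : ℝ)) := by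
      rw [← Real.rpow_intCast]
      push_cast
      ring_nf
    rw [mul_pow, h1, h3, h2, ← Real.rpow_add hmR]
    congr 1
    ring
  · rw [if_neg hw, if_neg (fun h => hw ((ghz_win_iff m d n hd X c hc Y).mpr h))]
    simp

private lemma ghz_count_aux (m n' : ℕ) [NeZero m] (cz : ZMod m) :
    Fintype.card {f : Fin (n' + 1) → ZMod m // ∑ i, f i = cz} = m ^ n' := by
  have e : {f : Fin (n' + 1) → ZMod m // ∑ i, f i = cz} ≃ (Fin n' → ZMod m) :=
    { toFun := fun f => Fin.tail f.1
      invFun := fun g => ⟨Fin.cons (cz - ∑ i, g i) g, by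
        rw [Fin.sum_univ_succ]
        simp [Fin.cons_succ]⟩
      left_inv := fun f => Subtype.ext (by
        have h : f.1 0 + ∑ i : Fin n', f.1 i.succ = cz := by
          rw [← Fin.sum_univ_succ]; exact f.2
        have h0 : cz - ∑ i : Fin n', Fin.tail f.1 i = f.1 0 :=
          sub_eq_of_eq_add h.symm
        simp only [h0, Fin.cons_self_tail])
      right_inv := fun g => by
        funext i
        simp [Fin.tail_cons] }
  rw [Fintype.card_congr e]
  simp [ZMod.card]

private def ghzFinZModEquiv (m : ℕ) [NeZero m] : Fin m ≃ ZMod m :=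
  { toFun := fun a => ((a : ℕ) : ZMod m)
    invFun := fun z => ⟨z.val, ZMod.val_lt z⟩
    left_inv := fun a => Fin.ext (ZMod.val_cast_of_lt a.isLt)
    right_inv := fun z => ZMod.natCast_rightInverse z }

/-- There are exactly `m^{n-1}` winning outcomes. -/
private lemma ghz_count_main (m d n : ℕ) (hm : 0 < m) (hn : 0 < n)
    (X : ℕ → ℕ) (c : ℤ)
    (hwin : ∀ Y : Fin n → Fin m, GhzWinning m d n X Y ↔
      (m : ℤ) ∣ (c - ∑ k : Fin n, ((Y k : ℕ) : ℤ))) :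
    (Finset.univ.filter (GhzWinning m d n X)).card = m ^ (n - 1) := by
  haveI : NeZero m := ⟨hm.ne'⟩
  obtain ⟨n', rfl⟩ : ∃ n', n = n' + 1 := ⟨n - 1, (Nat.succ_pred_eq_of_pos hn).symm⟩
  have hiff : ∀ Y : Fin (n' + 1) → Fin m,
      GhzWinning m d (n' + 1) X Y ↔
        (∑ k : Fin (n' + 1), ((Y k : ℕ) : ZMod m)) = ((c : ℤ) : ZMod m) := by
    intro Y
    rw [hwin Y]
    have h1 : ((m : ℤ) ∣ (c - ∑ k : Fin (n' + 1), ((Y k : ℕ) : ℤ))) ↔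
        ((∑ k : Fin (n' + 1), ((Y k : ℕ) : ℤ)) ≡ c [ZMOD (m : ℕ)]) :=
      (Int.modEq_iff_dvd).symm
    rw [h1, ← ZMod.intCast_eq_intCast_iff]
    constructor
    · intro h
      rw [← h]
      push_cast
      rfl
    · intro h
      rw [← h]
      push_cast
      rfl
  have hcard : (Finset.univ.filter (GhzWinning m d (n' + 1) X)).card
      = Fintype.card {Y : Fin (n' + 1) → Fin m // GhzWinning m d (n' + 1) X Y} :=
    (Fintype.card_subtype _).symm
  rw [hcard]
  have e1 : {Y : Fin (n' + 1) → Fin m // GhzWinning m d (n' + 1) X Y}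
      ≃ {f : Fin (n' + 1) → ZMod m // ∑ i, f i = ((c : ℤ) : ZMod m)} := by
    refine (Equiv.subtypeEquivRight hiff).trans ?_
    refine Equiv.subtypeEquiv
      (Equiv.arrowCongr (Equiv.refl (Fin (n' + 1))) (ghzFinZModEquiv m)) ?_
    intro Y
    simp [Equiv.arrowCongr, ghzFinZModEquiv]
  rw [Fintype.card_congr e1, ghz_count_aux]
  simp

/-- **The GHZ strategy wins the modulo-(m,d) game with probability 1.**
The outcome amplitudes are normalized (`∑_Y |A(Y)|² = 1`), the winning outcomes alone
carry the full probability, each winning outcome has probability `m^{1-n}`, and there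
are exactly `m^{n-1}` winning outcomes. -/
theorem ghz_wins_with_certainty
    (m d n : ℕ) (hm : 0 < m) (hd : 0 < d) (hn : 0 < n)
    (X : ℕ → ℕ) (hX : ∀ k ∈ Finset.range n, X k ≤ d - 1)
    (hprom : (d : ℤ) ∣ ∑ k ∈ Finset.range n, (X k : ℤ)) :
    (∑ Y : Fin n → Fin m, ‖ghzAmp m d n X Y‖ ^ 2 = 1) ∧
    (∑ Y ∈ Finset.univ.filter (GhzWinning m d n X),
        ‖ghzAmp m d n X Y‖ ^ 2 = 1) ∧
    (∀ Y : Fin n → Fin m, GhzWinning m d n X Y →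
        ‖ghzAmp m d n X Y‖ ^ 2 = (m : ℝ) ^ ((1 : ℤ) - (n : ℤ))) ∧
    (Finset.univ.filter (GhzWinning m d n X)).card = m ^ (n - 1) := by
  obtain ⟨c, hc⟩ := hprom
  have hmR : (0 : ℝ) < (m : ℝ) := by exact_mod_cast hm
  have hkey := fun Y => ghz_amp_sq m d n hm hd X c hc Y
  have hcount : (Finset.univ.filter (GhzWinning m d n X)).card = m ^ (n - 1) :=
    ghz_count_main m d n hm hn X c (fun Y => ghz_win_iff m d n hd X c hc Y)
  have h3 : ∀ Y : Fin n → Fin m, GhzWinning m d n X Y →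
      ‖ghzAmp m d n X Y‖ ^ 2 = (m : ℝ) ^ ((1 : ℤ) - (n : ℤ)) := by
    intro Y hY
    rw [hkey Y, if_pos hY]
  have h2 : ∑ Y ∈ Finset.univ.filter (GhzWinning m d n X),
      ‖ghzAmp m d n X Y‖ ^ 2 = 1 := by
    have hconst : ∑ Y ∈ Finset.univ.filter (GhzWinning m d n X),
        ‖ghzAmp m d n X Y‖ ^ 2
        = ∑ _Y ∈ Finset.univ.filter (GhzWinning m d n X), (m : ℝ) ^ ((1 : ℤ) - (n : ℤ)) :=
      Finset.sum_congr rfl fun Y hY => h3 Y (Finset.mem_filter.mp hY).2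
    rw [hconst, Finset.sum_const, hcount, nsmul_eq_mul, Nat.cast_pow,
      ← zpow_natCast (m : ℝ) (n - 1), ← zpow_add₀ hmR.ne']
    have hexp : ((n - 1 : ℕ) : ℤ) + ((1 : ℤ) - (n : ℤ)) = 0 := by
      have := Nat.succ_pred_eq_of_pos hn
      omega
    rw [hexp, zpow_zero]
  have h1 : ∑ Y : Fin n → Fin m, ‖ghzAmp m d n X Y‖ ^ 2 = 1 := by
    rw [← h2, Finset.sum_filter]
    refine Finset.sum_congr rfl fun Y _ => ?_
    by_cases h : GhzWinning m d n X Y <;> simp [h, hkey Y]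
  exact ⟨h1, h2, h3, hcount⟩
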